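/- The identity Σ_{a ∈ F_{2^r}} Σ_{b ∈ F_{2^m}, Tr_r^m(b)=0} B_{a,b} − Σ_{x ∈ S} e_x = 0 holds in ℝ^(F_{2^n}); that is, this collection of vectors is linearly dependent with these coefficients ±1. -/

import Mathlib

noncomputable section

/-- The relative trace `Tr_k^l` from `F_{2^l}` to `F_{2^k}`, written as a function on an
ambient field of characteristic two: `x ↦ x + x^(2^k) + x^(2^(2k)) + ⋯ + x^(2^(l-k))`. -/
def relTr {F : Type*} [Field F] (k l : ℕ) (x : F) : F :=
  ∑ i ∈ Finset.range (l / k), x ^ 2 ^ (k * i)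

/-- `(-1)^y` for `y ∈ F_2 ⊆ F`, identifying `F_2` with `{0,1}`. -/
def sgn {F : Type*} [Field F] [DecidableEq F] (y : F) : ℝ :=
  if y = 0 then 1 else -1

/-- The vector `B_{a,b} ∈ ℝ^F`, whose `x`-th coordinate is
`(1/2^m)·(-1)^(Tr_1^m(a·x^(2^m+1)) + Tr_1^n(b·x))`. -/
def Bvec {F : Type*} [Field F] [DecidableEq F] (m n : ℕ) (a b : F) : F → ℝ :=
  fun x => (1 / 2 ^ m : ℝ) * sgn (relTr 1 m (a * x ^ (2 ^ m + 1)) + relTr 1 n (b * x))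

/-- The standard basis vector `e_x` of `ℝ^F`. -/
def evec {F : Type*} [DecidableEq F] (x : F) : F → ℝ :=
  fun y => if y = x then 1 else 0

/-- The set `S = {x ∈ F_{2^n} : Tr_r^m(x^(2^m+1)) = 0 and x + x^(2^m) ∈ F_{2^r}}`. -/
def Sset {F : Type*} [Field F] (r m : ℕ) : Set F :=
  {x | relTr r m (x ^ (2 ^ m + 1)) = 0 ∧ (x + x ^ 2 ^ m) ^ 2 ^ r = x + x ^ 2 ^ m}

open Polynomial Finset

set_option linter.unusedSectionVars false
set_option linter.unusedVariables false

namespace StmtAux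

variable {F : Type*} [Field F]

/-- normalized form of the relative trace -/
def trS (r' t' : ℕ) (z : F) : F := ∑ i ∈ Finset.range t', z ^ 2 ^ (r' * i)

lemma relTr_eq_trS {r' : ℕ} (hr' : 0 < r') (t' : ℕ) (z : F) :
    relTr r' (t' * r') z = trS r' t' z := by
  rw [relTr, trS, Nat.mul_div_cancel _ hr']

lemma relTr_one_eq_trS (l : ℕ) (z : F) : relTr 1 l z = trS 1 l z := by
  rw [relTr, trS, Nat.div_one]

lemma trS_zero (r' t' : ℕ) : trS r' t' (0 : F) = 0 := by
  simp [trS]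

lemma trS_add [CharP F 2] (r' t' : ℕ) (x y : F) :
    trS r' t' (x + y) = trS r' t' x + trS r' t' y := by
  haveI : Fact (Nat.Prime 2) := ⟨Nat.prime_two⟩
  simp only [trS, add_pow_char_pow, Finset.sum_add_distrib]

lemma pow_pow_stable {a : F} {r' : ℕ} (ha : a ^ 2 ^ r' = a) (i : ℕ) :
    a ^ 2 ^ (r' * i) = a := by
  induction i with
  | zero => simp
  | succ k ih =>
    have : r' * (k + 1) = r' * k + r' := by ring
    rw [this, pow_add, pow_mul, ih, ha]

lemma trS_smul {r' : ℕ} (t' : ℕ) {a : F} (ha : a ^ 2 ^ r' = a) (x : F) :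
    trS r' t' (a * x) = a * trS r' t' x := by
  rw [trS, trS, Finset.mul_sum]
  refine Finset.sum_congr rfl fun i _ => ?_
  rw [mul_pow, pow_pow_stable ha i]

lemma telescope {R : Type*} [CommRing R] (h2 : (2 : R) = 0) (g : ℕ → R) (t' : ℕ) :
    (∑ i ∈ Finset.range t', g (i + 1)) + ∑ i ∈ Finset.range t', g i = g t' + g 0 := by
  have h1 : ∑ i ∈ Finset.range (t' + 1), g i
      = (∑ i ∈ Finset.range t', g (i + 1)) + g 0 := Finset.sum_range_succ' g t'
  have h3 : ∑ i ∈ Finset.range (t' + 1), g i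
      = (∑ i ∈ Finset.range t', g i) + g t' := Finset.sum_range_succ g t'
  linear_combination h1 - h3 + ((∑ i ∈ Finset.range t', g (i + 1)) - g t') * h2

lemma trS_pow_self [CharP F 2] {r' t' : ℕ} {z : F} (hz : z ^ 2 ^ (r' * t') = z) :
    trS r' t' z ^ 2 ^ r' = trS r' t' z := by
  haveI : Fact (Nat.Prime 2) := ⟨Nat.prime_two⟩
  have h2 : (2 : F) = 0 := by exact_mod_cast CharP.cast_eq_zero F 2
  have hfr : trS r' t' z ^ 2 ^ r' = ∑ i ∈ Finset.range t', z ^ 2 ^ (r' * (i + 1)) := by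
    rw [trS, sum_pow_char_pow]
    refine Finset.sum_congr rfl fun i _ => ?_
    rw [← pow_mul, ← pow_add]
    ring_nf
  have htel := telescope h2 (fun i => z ^ 2 ^ (r' * i)) t'
  simp only [Nat.mul_zero, pow_zero, pow_one] at htel
  rw [hfr, trS]
  rw [hz] at htel
  linear_combination htel + (z - ∑ i ∈ Finset.range t', z ^ 2 ^ (r' * i)) * h2

lemma trS_mul_self [CharP F 2] {l : ℕ} {z : F} (hz : z ^ 2 ^ l = z) :
    trS 1 l z * trS 1 l z = trS 1 l z := by
  have := trS_pow_self (r' := 1) (t' := l) (z := z) (by simpa using hz)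
  simpa [pow_succ, pow_one, sq] using this

lemma trS_one (l : ℕ) (z : F) : trS 1 l z = ∑ i ∈ Finset.range l, z ^ 2 ^ i := by
  simp [trS]

lemma trS_trans [CharP F 2] (r' t' : ℕ) (z : F) :
    trS 1 (t' * r') z = trS 1 r' (trS r' t' z) := by
  induction t' with
  | zero => simp [trS]
  | succ k ih =>
    have h1 : (k + 1) * r' = k * r' + r' := by ring
    rw [trS_one, h1, Finset.sum_range_add, ← trS_one]
    have h2 : trS r' (k + 1) z = trS r' k z + z ^ 2 ^ (r' * k) := Finset.sum_range_succ _ _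
    rw [h2, trS_add, ← ih]
    congr 1
    rw [trS_one]
    refine Finset.sum_congr rfl fun j _ => ?_
    rw [← pow_mul, ← pow_add, mul_comm r' k]

lemma trS_two_mul [CharP F 2] (m' : ℕ) (z : F) :
    trS 1 (2 * m') z = trS 1 m' (z + z ^ 2 ^ m') := by
  rw [trS_trans m' 2 z]
  congr 1
  rw [trS]
  simp [Finset.sum_range_succ]

lemma F2_cases {y : F} (hy : y * y = y) : y = 0 ∨ y = 1 := by
  have : y * (y - 1) = 0 := by ring_nf; linear_combination hy
  rcases mul_eq_zero.mp this with h | h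
  · exact Or.inl h
  · exact Or.inr (by linear_combination h)

section sgnLemmas
variable [DecidableEq F]

lemma sgn_zero : sgn (0 : F) = 1 := if_pos rfl

lemma sgn_add_of (h2 : (2 : F) = 0) {y z : F} (hy : y * y = y) (hz : z * z = z) :
    sgn (y + z) = sgn y * sgn z := by
  rcases F2_cases hy with h | h <;> rcases F2_cases hz with h' | h' <;> subst h h'
  · simp [sgn]
  · simp [sgn]
  · simp [sgn]
  · have : (1 : F) + 1 = 0 := by linear_combination h2
    simp [sgn, this]

lemma sgn_add_one (h2 : (2 : F) = 0) {y : F} (hy : y * y = y) :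
    sgn (y + 1) = - sgn y := by
  rcases F2_cases hy with h | h <;> subst h
  · simp [sgn]
  · have : (1 : F) + 1 = 0 := by linear_combination h2
    simp [sgn, this]

/-- root counting for divisors of `X^q - X` -/
lemma card_rootFilter [Fintype F] (p : F[X]) (hp : p ≠ 0)
    (hdvd : p ∣ X ^ Fintype.card F - X) :
    (Finset.univ.filter fun x : F => p.eval x = 0).card = p.natDegree := by
  classical
  have hq : 1 < Fintype.card F := Fintype.one_lt_card
  have hne : (X ^ Fintype.card F - X : F[X]) ≠ 0 := FiniteField.X_pow_card_sub_X_ne_zero F hq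
  have hroots : (X ^ Fintype.card F - X : F[X]).roots = Finset.univ.val :=
    FiniteField.roots_X_pow_card_sub_X F
  have hsplits : Splits (X ^ Fintype.card F - X : F[X]) := by
    rw [splits_iff_card_roots, hroots, FiniteField.X_pow_card_sub_X_natDegree_eq F hq]
    exact Finset.card_univ
  have hps : Splits p := hsplits.of_dvd hne hdvd
  have hcard : p.roots.card = p.natDegree := splits_iff_card_roots.mp hps
  have hle : p.roots ≤ (X ^ Fintype.card F - X : F[X]).roots := roots.le_of_dvd hne hdvd
  have hnodup : p.roots.Nodup := by
    rw [hroots] at hle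
    exact Multiset.nodup_of_le hle Finset.univ.nodup
  have hfe : Finset.univ.filter (fun x : F => p.eval x = 0) = p.roots.toFinset := by
    ext x
    simp [Multiset.mem_toFinset, mem_roots hp, IsRoot.def]
  rw [hfe, Multiset.toFinset_card_of_nodup hnodup, hcard]

end sgnLemmas

lemma pow_sub_X_dvd (m' n' : ℕ) (hm' : 0 < m') (hdvd : m' ∣ n') :
    (X ^ 2 ^ m' - X : F[X]) ∣ X ^ 2 ^ n' - X := by
  obtain ⟨k, hk⟩ := hdvd
  have h1 : ∀ l : ℕ, (X ^ 2 ^ l - X : F[X]) = X * (X ^ (2 ^ l - 1) - 1) := by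
    intro l
    have : 2 ^ l - 1 + 1 = 2 ^ l := by
      have := Nat.one_le_two_pow (n := l); omega
    rw [mul_sub, mul_one, ← pow_succ', this]
  rw [h1, h1]
  apply mul_dvd_mul_left
  have hnat : 2 ^ m' - 1 ∣ 2 ^ n' - 1 := by
    have := Nat.sub_dvd_pow_sub_pow (2 ^ m') 1 k
    rwa [one_pow, ← pow_mul, ← hk] at this
  obtain ⟨s, hs⟩ := hnat
  have := sub_dvd_pow_sub_pow (X ^ (2 ^ m' - 1) : F[X]) 1 s
  rwa [one_pow, ← pow_mul, ← hs] at this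

/-- the linearized polynomial whose roots are the kernel of the relative trace -/
def polyL (F : Type*) [Field F] (r' t' : ℕ) : F[X] := ∑ i ∈ Finset.range t', X ^ 2 ^ (r' * i)

lemma polyL_eval (r' t' : ℕ) (b : F) : (polyL F r' t').eval b = trS r' t' b := by
  simp [polyL, trS, eval_finset_sum]

lemma polyL_natDegree (r' t' : ℕ) (hr' : 0 < r') (ht' : 0 < t') :
    (polyL F r' t').natDegree = 2 ^ (r' * (t' - 1)) := by
  apply le_antisymm
  · apply Polynomial.natDegree_sum_le_of_forall_le
    intro i hi
    rw [natDegree_X_pow]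
    exact Nat.pow_le_pow_right (by norm_num)
      (Nat.mul_le_mul_left r' (by have := Finset.mem_range.mp hi; omega))
  · apply Polynomial.le_natDegree_of_ne_zero
    rw [polyL, finset_sum_coeff]
    have h1 : ∀ i ∈ Finset.range t',
        ((X : F[X]) ^ 2 ^ (r' * i)).coeff (2 ^ (r' * (t' - 1)))
          = if i = t' - 1 then 1 else 0 := by
      intro i hi
      rw [coeff_X_pow]
      congr 1
      rw [eq_iff_iff]
      constructor
      · intro h
        have := Nat.pow_right_injective (le_refl 2) h
        have hii := Nat.eq_of_mul_eq_mul_left hr' this.symm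
        omega
      · rintro rfl; rfl
    rw [Finset.sum_congr rfl h1, Finset.sum_ite_eq' (Finset.range t') (t' - 1) (fun _ => (1 : F))]
    rw [if_pos (Finset.mem_range.mpr (by omega))]
    exact one_ne_zero

lemma polyL_mul_eq [CharP F 2] (r' t' : ℕ) (hr' : 0 < r') :
    polyL F r' t' * ((polyL F r' t') ^ (2 ^ r' - 1) + 1) = X ^ 2 ^ (r' * t') - X := by
  haveI : Fact (Nat.Prime 2) := ⟨Nat.prime_two⟩
  have h2 : (2 : F[X]) = 0 := by exact_mod_cast CharP.cast_eq_zero F[X] 2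
  have hpow : polyL F r' t' * (polyL F r' t') ^ (2 ^ r' - 1) = (polyL F r' t') ^ 2 ^ r' := by
    rw [← pow_succ']
    congr 1
    have := Nat.one_le_two_pow (n := r'); omega
  rw [mul_add, mul_one, hpow]
  have hfr : (polyL F r' t') ^ 2 ^ r'
      = ∑ i ∈ Finset.range t', (X : F[X]) ^ 2 ^ (r' * (i + 1)) := by
    rw [polyL, sum_pow_char_pow]
    refine Finset.sum_congr rfl fun i _ => ?_
    rw [← pow_mul, ← pow_add]
    ring_nf
  have htel : (∑ i ∈ Finset.range t', (X : F[X]) ^ 2 ^ (r' * (i + 1)))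
      + ∑ i ∈ Finset.range t', (X : F[X]) ^ 2 ^ (r' * i)
      = (X : F[X]) ^ 2 ^ (r' * t') + X ^ 2 ^ (r' * 0) := by
    have h1 : ∑ i ∈ Finset.range (t' + 1), (X : F[X]) ^ 2 ^ (r' * i)
        = (∑ i ∈ Finset.range t', (X : F[X]) ^ 2 ^ (r' * (i + 1))) + X ^ 2 ^ (r' * 0) :=
      Finset.sum_range_succ' _ t'
    have h3 : ∑ i ∈ Finset.range (t' + 1), (X : F[X]) ^ 2 ^ (r' * i)
        = (∑ i ∈ Finset.range t', (X : F[X]) ^ 2 ^ (r' * i)) + X ^ 2 ^ (r' * t') :=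
      Finset.sum_range_succ _ t'
    linear_combination h1 - h3
      + ((∑ i ∈ Finset.range t', (X : F[X]) ^ 2 ^ (r' * (i + 1))) - X ^ 2 ^ (r' * t')) * h2
  rw [hfr, polyL]
  simp only [Nat.mul_zero, pow_zero, pow_one] at htel
  linear_combination htel + X * h2

section counting
variable [Fintype F] [DecidableEq F] {n : ℕ}

lemma card_pow_eq (hF : Fintype.card F = 2 ^ n) (m' : ℕ) (hm' : 0 < m') (hdvd : m' ∣ n) :
    (Finset.univ.filter fun x : F => x ^ 2 ^ m' = x).card = 2 ^ m' := by
  have h1 : 1 < 2 ^ m' := Nat.one_lt_two_pow (by omega)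
  have hne : (X ^ 2 ^ m' - X : F[X]) ≠ 0 := FiniteField.X_pow_card_sub_X_ne_zero F h1
  have hdeg : (X ^ 2 ^ m' - X : F[X]).natDegree = 2 ^ m' :=
    FiniteField.X_pow_card_sub_X_natDegree_eq F h1
  have hdv : (X ^ 2 ^ m' - X : F[X]) ∣ X ^ Fintype.card F - X := by
    rw [hF]; exact pow_sub_X_dvd m' n hm' hdvd
  have hmain := card_rootFilter (X ^ 2 ^ m' - X : F[X]) hne hdv
  rw [hdeg] at hmain
  have hfe : (Finset.univ.filter fun x : F => x ^ 2 ^ m' = x)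
      = Finset.univ.filter fun x : F => eval x (X ^ 2 ^ m' - X : F[X]) = 0 := by
    ext x; simp [sub_eq_zero]
  rw [hfe, hmain]

lemma card_ker [CharP F 2] (hF : Fintype.card F = 2 ^ n) (r' t' : ℕ) (hr' : 0 < r')
    (ht' : 0 < t') (hdvd : r' * t' ∣ n) :
    (Finset.univ.filter fun b : F => b ^ 2 ^ (r' * t') = b ∧ trS r' t' b = 0).card
      = 2 ^ (r' * (t' - 1)) := by
  have hdeg := polyL_natDegree (F := F) r' t' hr' ht'
  have hLne : polyL F r' t' ≠ 0 := by
    intro h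
    rw [h, natDegree_zero] at hdeg
    have : 0 < 2 ^ (r' * (t' - 1)) := Nat.pow_pos two_pos
    omega
  have hdvd1 : polyL F r' t' ∣ X ^ 2 ^ (r' * t') - X := ⟨_, (polyL_mul_eq r' t' hr').symm⟩
  have hdvd2 : polyL F r' t' ∣ X ^ Fintype.card F - X := by
    rw [hF]
    exact hdvd1.trans (pow_sub_X_dvd (r' * t') n (Nat.mul_pos hr' ht') hdvd)
  have hcard := card_rootFilter (polyL F r' t') hLne hdvd2
  rw [hdeg] at hcard
  rw [← hcard]
  apply congrArg
  ext b
  simp only [Finset.mem_filter, Finset.mem_univ, true_and, polyL_eval]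
  constructor
  · rintro ⟨-, h⟩; exact h
  · intro h
    refine ⟨?_, h⟩
    have he := congrArg (Polynomial.eval b) (polyL_mul_eq (F := F) r' t' hr')
    simp only [eval_mul, eval_sub, eval_pow, eval_X, polyL_eval, h, zero_mul] at he
    exact sub_eq_zero.mp he.symm

lemma sum_sgn_eq_zero [CharP F 2] (hF : Fintype.card F = 2 ^ n) (m' : ℕ) (hm' : 0 < m')
    (hdvd : m' ∣ n) :
    ∑ v ∈ Finset.univ.filter (fun v : F => v ^ 2 ^ m' = v), sgn (trS 1 m' v) = 0 := by
  classical
  have hK : (Finset.univ.filter fun b : F => b ^ 2 ^ m' = b ∧ trS 1 m' b = 0).card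
      = 2 ^ (m' - 1) := by
    have := card_ker hF 1 m' one_pos hm' (by simpa using hdvd)
    simpa using this
  have hT := card_pow_eq hF m' hm' hdvd
  rw [show (fun v : F => sgn (trS 1 m' v))
      = fun v : F => if trS 1 m' v = 0 then (1 : ℝ) else -1 from rfl]
  rw [Finset.sum_ite, Finset.sum_const, Finset.sum_const]
  rw [Finset.filter_filter, Finset.filter_filter]
  have hsplit := Finset.card_filter_add_card_filter_not
    (s := Finset.univ.filter fun v : F => v ^ 2 ^ m' = v)
    (p := fun v : F => trS 1 m' v = 0)
  rw [Finset.filter_filter, Finset.filter_filter, hT, hK] at hsplit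
  rw [hK]
  have h2 : 2 ^ m' = 2 ^ (m' - 1) * 2 := by
    conv_lhs => rw [show m' = (m' - 1) + 1 by omega]
    rw [pow_succ]
  have hneg : (Finset.univ.filter fun v : F => v ^ 2 ^ m' = v ∧ ¬trS 1 m' v = 0).card
      = 2 ^ (m' - 1) := by omega
  rw [hneg]
  simp [nsmul_eq_mul]

lemma sum_sgn_mul_eq_zero [CharP F 2] (hF : Fintype.card F = 2 ^ n) (m' : ℕ) (hm' : 0 < m')
    (hdvd : m' ∣ n) {w : F} (hw : w ^ 2 ^ m' = w) (hw0 : w ≠ 0) :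
    ∑ v ∈ Finset.univ.filter (fun v : F => v ^ 2 ^ m' = v), sgn (trS 1 m' (w * v)) = 0 := by
  rw [← sum_sgn_eq_zero hF m' hm' hdvd]
  apply Finset.sum_nbij' (fun v => w * v) (fun v => w⁻¹ * v)
  · intro v hv
    simp only [Finset.mem_filter, Finset.mem_univ, true_and] at hv ⊢
    rw [mul_pow, hw, hv]
  · intro v hv
    simp only [Finset.mem_filter, Finset.mem_univ, true_and] at hv ⊢
    have hwi : w⁻¹ ^ 2 ^ m' = w⁻¹ := by rw [inv_pow, hw]
    rw [mul_pow, hwi, hv]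
  · intro v _; field_simp
  · intro v _; field_simp
  · intro v _; rfl

end counting

end StmtAux

open StmtAux

theorem stmt5 (t r : ℕ) (ht : 0 < t) (hr : 0 < r) (m n : ℕ) (hm : m = t * r)
    (hn : n = 2 * m) (F : Type*) [Field F] [Fintype F] [DecidableEq F]
    (hF : Fintype.card F = 2 ^ n) :
    (∑ a ∈ Finset.univ.filter (fun a : F => a ^ 2 ^ r = a),
        ∑ b ∈ Finset.univ.filter (fun b : F => b ^ 2 ^ m = b ∧ relTr r m b = 0),
          Bvec m n a b) -
      (∑ x ∈ Finset.univ.filter (fun x : F =>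
          relTr r m (x ^ (2 ^ m + 1)) = 0 ∧ (x + x ^ 2 ^ m) ^ 2 ^ r = x + x ^ 2 ^ m),
        evec x) = 0 := by
  classical
  haveI hfact : Fact (Nat.Prime 2) := ⟨Nat.prime_two⟩
  have hm0 : 0 < m := by rw [hm]; positivity
  have hn0 : 0 < n := by omega
  -- characteristic 2
  haveI hchar : CharP F 2 := by
    obtain ⟨p, hpi⟩ := CharP.exists F
    haveI := hpi
    obtain ⟨k, hpp, hk⟩ := FiniteField.card F p
    have hp2 : p = 2 := by
      have hdvd : p ∣ 2 ^ n := by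
        rw [← hF, hk]
        exact dvd_pow_self p k.2.ne'
      have := hpp.dvd_of_dvd_pow (n := n) (m := 2) hdvd
      exact (Nat.prime_dvd_prime_iff_eq hpp Nat.prime_two).mp this
    rwa [hp2] at hpi
  have h2F : (2 : F) = 0 := by exact_mod_cast CharP.cast_eq_zero F 2
  have hall : ∀ z : F, z ^ 2 ^ n = z := by
    intro z; rw [← hF]; exact FiniteField.pow_card z
  have hrt_m : r * t = m := by rw [hm]; ring
  have hrdvdn : r ∣ n := ⟨2 * t, by rw [hn, hm]; ring⟩
  have hmdvdn : m ∣ n := ⟨2, by rw [hn]; ring⟩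
  have hrlem : r ≤ m := by
    rw [hm]; exact Nat.le_mul_of_pos_left r ht
  have hstab : ∀ a : F, a ^ 2 ^ r = a → a ^ 2 ^ m = a := by
    intro a ha
    rw [← hrt_m]
    exact pow_pow_stable ha t
  -- rewrite relTr to trS
  have hrelrm : ∀ z : F, relTr r m z = trS r t z := by
    intro z; rw [hm]; exact relTr_eq_trS hr t z
  have hrel1m : ∀ z : F, relTr 1 m z = trS 1 m z := relTr_one_eq_trS m
  have hrel1n : ∀ z : F, relTr 1 n z = trS 1 n z := relTr_one_eq_trS n
  have htrans : ∀ z : F, trS 1 m z = trS 1 r (trS r t z) := by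
    intro z
    conv_lhs => rw [← hrt_m, mul_comm r t]
    exact trS_trans r t z
  rw [sub_eq_zero]
  funext x0
  simp only [Finset.sum_apply, Bvec, evec, hrelrm, hrel1m, hrel1n, Finset.sum_ite_eq,
    Finset.mem_filter, Finset.mem_univ, true_and]
  set Rf : Finset F := Finset.univ.filter (fun a : F => a ^ 2 ^ r = a) with hRdef
  set Kf : Finset F := Finset.univ.filter
    (fun b : F => b ^ 2 ^ m = b ∧ trS r t b = 0) with hKdef
  set Tf : Finset F := Finset.univ.filter (fun v : F => v ^ 2 ^ m = v) with hTdef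
  set y0 : F := x0 ^ (2 ^ m + 1) with hy0def
  set u0 : F := x0 + x0 ^ 2 ^ m with hu0def
  set c0 : F := trS r t y0 with hc0def
  -- stability facts
  have h2mm : (2 : ℕ) ^ m * 2 ^ m = 2 ^ n := by
    rw [← pow_add, hn]; congr 1; omega
  have hy0T : y0 ^ 2 ^ m = y0 := by
    have h1 : y0 ^ 2 ^ m = x0 ^ ((2 ^ m + 1) * 2 ^ m) := by rw [hy0def, ← pow_mul]
    have h2 : (2 ^ m + 1) * 2 ^ m = 2 ^ n + 2 ^ m := by rw [← h2mm]; ring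
    rw [h1, h2, pow_add, hall, hy0def, mul_comm, ← pow_succ]
  have hu0T : u0 ^ 2 ^ m = u0 := by
    have h1 : (x0 + x0 ^ 2 ^ m) ^ 2 ^ m = x0 ^ 2 ^ m + (x0 ^ 2 ^ m) ^ 2 ^ m :=
      add_pow_char_pow x0 (x0 ^ 2 ^ m) 2 m
    have h2 : (x0 ^ 2 ^ m) ^ 2 ^ m = x0 := by rw [← pow_mul, h2mm, hall]
    rw [hu0def, h1, h2, add_comm]
  have hc0R : c0 ^ 2 ^ r = c0 := by
    rw [hc0def]
    exact trS_pow_self (by rw [hrt_m]; exact hy0T)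
  have hRcard : Rf.card = 2 ^ r := card_pow_eq hF r hr hrdvdn
  have hTcard : Tf.card = 2 ^ m := card_pow_eq hF m hm0 hmdvdn
  have hrt1 : r * (t - 1) = m - r := by
    obtain ⟨k, rfl⟩ : ∃ k, t = k + 1 := ⟨t - 1, by omega⟩
    have h : (k + 1) * r = r * k + r := by ring
    rw [Nat.add_sub_cancel, hm, h, Nat.add_sub_cancel]
  have hKcard : Kf.card = 2 ^ (m - r) := by
    have hcc := card_ker hF r t hr ht (by rw [hrt_m]; exact hmdvdn)
    rw [hrt_m, hrt1] at hcc
    exact hcc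
  have h0K : (0 : F) ∈ Kf := by
    refine Finset.mem_filter.mpr ⟨Finset.mem_univ _, ?_, trS_zero r t⟩
    exact zero_pow (by positivity)
  -- the a-sum
  have hA : (∑ a ∈ Rf, sgn (trS 1 m (a * y0))) = if c0 = 0 then ((2 : ℝ) ^ r) else 0 := by
    by_cases hc : c0 = 0
    · rw [if_pos hc]
      have h1 : ∀ a ∈ Rf, sgn (trS 1 m (a * y0)) = 1 := by
        intro a ha
        have ha' : a ^ 2 ^ r = a := (Finset.mem_filter.mp ha).2
        rw [htrans, trS_smul t ha', ← hc0def, hc, mul_zero, trS_zero, sgn_zero]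
      rw [Finset.sum_congr rfl h1, Finset.sum_const, hRcard, nsmul_eq_mul, mul_one]
      push_cast; ring
    · rw [if_neg hc]
      have h1 : ∀ a ∈ Rf, sgn (trS 1 m (a * y0)) = sgn (trS 1 r (c0 * a)) := by
        intro a ha
        have ha' : a ^ 2 ^ r = a := (Finset.mem_filter.mp ha).2
        rw [htrans, trS_smul t ha', ← hc0def, mul_comm a c0]
      rw [Finset.sum_congr rfl h1]
      exact sum_sgn_mul_eq_zero hF r hr hrdvdn hc0R hc
  -- inner sums over Kf
  have hinner_R : ∀ u : F, u ^ 2 ^ r = u →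
      (∑ b ∈ Kf, sgn (trS 1 m (b * u))) = ((2 : ℝ) ^ (m - r)) := by
    intro u hu
    have h1 : ∀ b ∈ Kf, sgn (trS 1 m (b * u)) = 1 := by
      intro b hb
      have hb2 : trS r t b = 0 := ((Finset.mem_filter.mp hb).2).2
      rw [htrans, mul_comm b u, trS_smul t hu, hb2, mul_zero, trS_zero, sgn_zero]
    rw [Finset.sum_congr rfl h1, Finset.sum_const, hKcard, nsmul_eq_mul, mul_one]
    push_cast; ring
  have hdich : ∀ u : F, u ^ 2 ^ m = u →
      (∑ b ∈ Kf, sgn (trS 1 m (b * u))) = 0 ∨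
      (∑ b ∈ Kf, sgn (trS 1 m (b * u))) = ((2 : ℝ) ^ (m - r)) := by
    intro u hu
    by_cases hex : ∃ b0 ∈ Kf, trS 1 m (b0 * u) ≠ 0
    · left
      obtain ⟨b0, hb0K, hb0ne⟩ := hex
      have hb0T : b0 ^ 2 ^ m = b0 := ((Finset.mem_filter.mp hb0K).2).1
      have hb0tr : trS r t b0 = 0 := ((Finset.mem_filter.mp hb0K).2).2
      have hγ2 : trS 1 m (b0 * u) * trS 1 m (b0 * u) = trS 1 m (b0 * u) :=
        trS_mul_self (by rw [mul_pow, hb0T, hu])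
      have hγ1 : trS 1 m (b0 * u) = 1 := (F2_cases hγ2).resolve_left hb0ne
      have hb00 : b0 + b0 = 0 := by linear_combination b0 * h2F
      have hKadd : ∀ b ∈ Kf, b + b0 ∈ Kf := by
        intro b hb
        obtain ⟨-, hbT, hbtr⟩ := Finset.mem_filter.mp hb
        refine Finset.mem_filter.mpr ⟨Finset.mem_univ _, ?_, ?_⟩
        · rw [add_pow_char_pow, hbT, hb0T]
        · rw [trS_add, hbtr, hb0tr, add_zero]
      have hshift : (∑ b ∈ Kf, sgn (trS 1 m (b * u)))
          = ∑ b ∈ Kf, sgn (trS 1 m ((b + b0) * u)) := by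
        apply Finset.sum_nbij' (fun b => b + b0) (fun b => b + b0) hKadd hKadd
        · intro b _
          rw [add_assoc, hb00, add_zero]
        · intro b _
          rw [add_assoc, hb00, add_zero]
        · intro b _
          rw [add_assoc, hb00, add_zero]
      have hneg : ∀ b ∈ Kf, sgn (trS 1 m ((b + b0) * u)) = - sgn (trS 1 m (b * u)) := by
        intro b hb
        have hbT : b ^ 2 ^ m = b := ((Finset.mem_filter.mp hb).2).1
        have hθ : trS 1 m (b * u) * trS 1 m (b * u) = trS 1 m (b * u) :=
          trS_mul_self (by rw [mul_pow, hbT, hu])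
        rw [add_mul, trS_add, hγ1, sgn_add_one h2F hθ]
      have hself : (∑ b ∈ Kf, sgn (trS 1 m (b * u)))
          = - (∑ b ∈ Kf, sgn (trS 1 m (b * u))) := by
        conv_lhs => rw [hshift]
        rw [Finset.sum_congr rfl hneg, Finset.sum_neg_distrib]
      linarith
    · right
      push_neg at hex
      have h1 : ∀ b ∈ Kf, sgn (trS 1 m (b * u)) = 1 := fun b hb => by
        rw [hex b hb, sgn_zero]
      rw [Finset.sum_congr rfl h1, Finset.sum_const, hKcard, nsmul_eq_mul, mul_one]
      push_cast; ring
  have hswap : (∑ u ∈ Tf, ∑ b ∈ Kf, sgn (trS 1 m (b * u))) = (2 : ℝ) ^ m := by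
    rw [Finset.sum_comm]
    rw [Finset.sum_eq_single_of_mem (0 : F) h0K (fun b hb hbne =>
      sum_sgn_mul_eq_zero hF m hm0 hmdvdn ((Finset.mem_filter.mp hb).2).1 hbne)]
    have h1 : ∀ u ∈ Tf, sgn (trS 1 m ((0 : F) * u)) = 1 := fun u _ => by
      rw [zero_mul, trS_zero, sgn_zero]
    rw [Finset.sum_congr rfl h1, Finset.sum_const, hTcard, nsmul_eq_mul, mul_one]
    push_cast; ring
  have hZ : ∀ u : F, u ^ 2 ^ m = u → u ^ 2 ^ r ≠ u →
      (∑ b ∈ Kf, sgn (trS 1 m (b * u))) = 0 := by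
    intro u huT hur
    set Zf : Finset F := Tf.filter
      (fun u : F => (∑ b ∈ Kf, sgn (trS 1 m (b * u))) ≠ 0) with hZdef
    have hsumZ : (∑ u ∈ Zf, ∑ b ∈ Kf, sgn (trS 1 m (b * u)))
        = ∑ u ∈ Tf, ∑ b ∈ Kf, sgn (trS 1 m (b * u)) :=
      Finset.sum_filter_of_ne (fun u _ h => h)
    have hZval : ∀ u' ∈ Zf, (∑ b ∈ Kf, sgn (trS 1 m (b * u'))) = ((2 : ℝ) ^ (m - r)) := by
      intro u' hu'
      obtain ⟨hu'T, hu'ne⟩ := Finset.mem_filter.mp hu'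
      exact (hdich u' ((Finset.mem_filter.mp hu'T).2)).resolve_left hu'ne
    have hZcount : (Zf.card : ℝ) * (2 : ℝ) ^ (m - r) = (2 : ℝ) ^ m := by
      rw [← hswap, ← hsumZ, Finset.sum_congr rfl hZval, Finset.sum_const, nsmul_eq_mul]
    have hpow : ((2 : ℝ) ^ r) * (2 : ℝ) ^ (m - r) = (2 : ℝ) ^ m := by
      rw [← pow_add]; congr 1; omega
    have hZcard : Zf.card = 2 ^ r := by
      have hcast : (Zf.card : ℝ) = (2 : ℝ) ^ r := by
        have h2pos : (0 : ℝ) < (2 : ℝ) ^ (m - r) := by positivity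
        apply mul_right_cancel₀ (ne_of_gt h2pos)
        rw [hZcount, hpow]
      exact_mod_cast hcast
    have hRsubZ : Rf ⊆ Zf := by
      intro a haR
      have ha' : a ^ 2 ^ r = a := (Finset.mem_filter.mp haR).2
      refine Finset.mem_filter.mpr
        ⟨Finset.mem_filter.mpr ⟨Finset.mem_univ _, hstab a ha'⟩, ?_⟩
      rw [hinner_R a ha']
      positivity
    have hRZ : Rf = Zf := Finset.eq_of_subset_of_card_le hRsubZ (by rw [hZcard, hRcard])
    by_contra hne
    have huZ : u ∈ Zf := Finset.mem_filter.mpr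
      ⟨Finset.mem_filter.mpr ⟨Finset.mem_univ _, huT⟩, hne⟩
    rw [← hRZ] at huZ
    exact hur (Finset.mem_filter.mp huZ).2
  -- factor the double sum
  have hsummand : ∀ a ∈ Rf, ∀ b ∈ Kf,
      (1 / 2 ^ m : ℝ) * sgn (trS 1 m (a * y0) + trS 1 n (b * x0))
        = (1 / 2 ^ m : ℝ) * (sgn (trS 1 m (a * y0)) * sgn (trS 1 m (b * u0))) := by
    intro a ha b hb
    have ha' : a ^ 2 ^ r = a := (Finset.mem_filter.mp ha).2
    have hbT : b ^ 2 ^ m = b := ((Finset.mem_filter.mp hb).2).1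
    have hα : trS 1 m (a * y0) * trS 1 m (a * y0) = trS 1 m (a * y0) :=
      trS_mul_self (by rw [mul_pow, hstab a ha', hy0T])
    have hβ : trS 1 n (b * x0) * trS 1 n (b * x0) = trS 1 n (b * x0) :=
      trS_mul_self (hall _)
    rw [sgn_add_of h2F hα hβ]
    have hgb : trS 1 n (b * x0) = trS 1 m (b * u0) := by
      have h1 : trS 1 n (b * x0) = trS 1 m (b * x0 + (b * x0) ^ 2 ^ m) := by
        rw [hn]; exact trS_two_mul m _
      rw [h1, mul_pow, hbT, ← mul_add]
    rw [hgb]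
  have hfactor : (∑ a ∈ Rf, ∑ b ∈ Kf,
        (1 / 2 ^ m : ℝ) * sgn (trS 1 m (a * y0) + trS 1 n (b * x0)))
      = (1 / 2 ^ m : ℝ) * ((∑ a ∈ Rf, sgn (trS 1 m (a * y0)))
          * (∑ b ∈ Kf, sgn (trS 1 m (b * u0)))) := by
    rw [Finset.sum_congr rfl (fun a ha =>
      Finset.sum_congr rfl (fun b hb => hsummand a ha b hb))]
    simp only [← Finset.mul_sum, ← Finset.sum_mul]
  rw [hfactor, hA]
  have hpow : ((2 : ℝ) ^ r) * (2 : ℝ) ^ (m - r) = (2 : ℝ) ^ m := by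
    rw [← pow_add]; congr 1; omega
  by_cases hc : c0 = 0 <;> by_cases hu : u0 ^ 2 ^ r = u0
  · rw [hinner_R u0 hu, if_pos hc, if_pos ⟨hc, hu⟩, hpow]
    have : (2 : ℝ) ^ m ≠ 0 := by positivity
    field_simp
  · rw [hZ u0 hu0T hu, if_pos hc, if_neg (fun h => hu h.2), mul_zero, mul_zero]
  · rw [hinner_R u0 hu, if_neg hc, if_neg (fun h => hc h.1), zero_mul, mul_zero]
  · rw [hZ u0 hu0T hu, if_neg hc, if_neg (fun h => hc h.1), mul_zero, mul_zero]
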